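/- Let γ > 0 and let x, y ∈ ℝ with y ≠ x. Under the hierarchical model in which the latent variance m has prior density EXP(m; γ) on (0, ∞) and the observation density is N(y; x, m), the conditional expectation of the latent precision 1/m given (x, y) is E[1/m | x, y] = [∫₀^∞ (1/m) · N(y; x, m) · EXP(m; γ) dm] / [∫₀^∞ N(y; x, m) · EXP(m; γ) dm] = √(2/(γ(y−x)²)), i.e. equals √(2/γ) / |y−x|. -/

import Mathlib

open MeasureTheory

/-- Proposition 2 (first identity, DDFM): under the hierarchical model
`y | x, m ~ N(y; x, m)`, `m ~ EXP(m; γ)`, the conditional expectation of the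
latent precision `1/m` given `(x, y)` is `√(2/(γ(y−x)²)) = √(2/γ)/|y−x|`. -/
theorem conditional_expectation_latent_precision_m (γ x y : ℝ) (hγ : 0 < γ)
    (hxy : y ≠ x) :
    (∫ m in Set.Ioi (0 : ℝ),
        (1 / m) * ((Real.sqrt (2 * Real.pi * m))⁻¹ * Real.exp (-(y - x) ^ 2 / (2 * m))) *
          ((1 / γ) * Real.exp (-m / γ))) /
      (∫ m in Set.Ioi (0 : ℝ),
        (Real.sqrt (2 * Real.pi * m))⁻¹ * Real.exp (-(y - x) ^ 2 / (2 * m)) *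
          ((1 / γ) * Real.exp (-m / γ)))
      = Real.sqrt (2 / (γ * (y - x) ^ 2)) ∧
    Real.sqrt (2 / (γ * (y - x) ^ 2)) = Real.sqrt (2 / γ) / |y - x| := by
  have ha : (0:ℝ) < (y - x) ^ 2 := by
    have : y - x ≠ 0 := sub_ne_zero.mpr hxy
    positivity
  set a : ℝ := (y - x) ^ 2 with ha_def
  set c : ℝ := γ * a / 2 with hc_def
  have hc : 0 < c := by rw [hc_def]; positivity
  set h : ℝ → ℝ := fun m => (m * Real.sqrt m)⁻¹ * Real.exp (-(a / 2) / m - m / γ) with hh_def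
  set g : ℝ → ℝ := fun m => (Real.sqrt m)⁻¹ * Real.exp (-(a / 2) / m - m / γ) with hg_def
  set K : ℝ := (Real.sqrt (2 * Real.pi))⁻¹ * (1 / γ) with hK_def
  clear_value K g h c a
  have hs2 : (0:ℝ) < Real.sqrt (2 * Real.pi) := Real.sqrt_pos.mpr (by positivity)
  have hK : 0 < K := by rw [hK_def]; positivity
  -- factor constants out of numerator and denominator
  have hnum : (∫ m in Set.Ioi (0 : ℝ),
      (1 / m) * ((Real.sqrt (2 * Real.pi * m))⁻¹ * Real.exp (-a / (2 * m))) *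
        ((1 / γ) * Real.exp (-m / γ))) = K * ∫ m in Set.Ioi (0 : ℝ), h m := by
    rw [← integral_const_mul]
    refine setIntegral_congr_fun measurableSet_Ioi (fun m hm => ?_)
    have hm0 : (0:ℝ) < m := hm
    have hsm : (0:ℝ) < Real.sqrt m := Real.sqrt_pos.mpr hm0
    have he : Real.exp (-(a / 2) / m - m / γ)
        = Real.exp (-a / (2 * m)) * Real.exp (-m / γ) := by
      rw [← Real.exp_add]; congr 1; field_simp; ring
    simp only [hh_def, hK_def, he]
    rw [Real.sqrt_mul (by positivity) m]
    field_simp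
  have hden : (∫ m in Set.Ioi (0 : ℝ),
      (Real.sqrt (2 * Real.pi * m))⁻¹ * Real.exp (-a / (2 * m)) *
        ((1 / γ) * Real.exp (-m / γ))) = K * ∫ m in Set.Ioi (0 : ℝ), g m := by
    rw [← integral_const_mul]
    refine setIntegral_congr_fun measurableSet_Ioi (fun m hm => ?_)
    have hm0 : (0:ℝ) < m := hm
    have hsm : (0:ℝ) < Real.sqrt m := Real.sqrt_pos.mpr hm0
    have he : Real.exp (-(a / 2) / m - m / γ)
        = Real.exp (-a / (2 * m)) * Real.exp (-m / γ) := by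
      rw [← Real.exp_add]; congr 1; field_simp; ring
    simp only [hg_def, hK_def, he]
    rw [Real.sqrt_mul (by positivity) m]
    field_simp
  -- change of variables m ↦ c / m : ∫ g = √c * ∫ h
  have himg : (fun m : ℝ => c / m) '' Set.Ioi 0 = Set.Ioi 0 := by
    ext t
    constructor
    · rintro ⟨m, hm, rfl⟩
      exact div_pos hc hm
    · intro ht
      exact ⟨c / t, div_pos hc ht, by field_simp⟩
  have hcv : (∫ m in Set.Ioi (0 : ℝ), g m)
      = Real.sqrt c * ∫ m in Set.Ioi (0 : ℝ), h m := by
    have hchg := MeasureTheory.integral_image_eq_integral_abs_deriv_smul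
      (f := fun m : ℝ => c / m) (f' := fun m : ℝ => c * (-(m ^ 2)⁻¹))
      measurableSet_Ioi
      (fun m hm => by
        simpa [div_eq_mul_inv] using
          ((hasDerivAt_inv (ne_of_gt hm)).const_mul c).hasDerivWithinAt)
      (fun m₁ h₁ m₂ h₂ hEq => by
        simp only [Set.mem_Ioi] at h₁ h₂
        field_simp at hEq
        exact hEq.symm)
      g
    rw [himg] at hchg
    rw [hchg, ← integral_const_mul]
    refine setIntegral_congr_fun measurableSet_Ioi (fun m hm => ?_)
    have hm0 : (0:ℝ) < m := hm
    have hsm : (0:ℝ) < Real.sqrt m := Real.sqrt_pos.mpr hm0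
    have hsc : (0:ℝ) < Real.sqrt c := Real.sqrt_pos.mpr hc
    have hsqdiv : Real.sqrt (c / m) = Real.sqrt c / Real.sqrt m :=
      Real.sqrt_div hc.le m
    have hexp : Real.exp (-(a / 2) / (c / m) - (c / m) / γ)
        = Real.exp (-(a / 2) / m - m / γ) := by
      congr 1
      rw [hc_def]
      field_simp
      ring
    simp only [smul_eq_mul, hg_def, hh_def, hsqdiv, hexp, abs_mul, abs_of_pos hc,
      abs_neg, abs_inv, abs_of_pos (pow_pos hm0 2)]
    have hc2 : Real.sqrt c ^ 2 = c := Real.sq_sqrt hc.le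
    have hm2 : Real.sqrt m ^ 2 = m := Real.sq_sqrt hm0.le
    generalize Real.exp (-(a / 2) / m - m / γ) = E
    have hc2' : Real.sqrt c * Real.sqrt c = c := Real.mul_self_sqrt hc.le
    have hm2' : Real.sqrt m * Real.sqrt m = m := Real.mul_self_sqrt hm0.le
    field_simp
    linear_combination (c * E) * hm2 - (E * m) * hc2
  -- integrability of h on (0, ∞)
  have hint : IntegrableOn h (Set.Ioi 0) := by
    have hbase : IntegrableOn
        (fun m : ℝ => m ^ ((1:ℝ)/2) * Real.exp (-(1/γ) * m ^ (1:ℝ))) (Set.Ioi 0) :=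
      integrableOn_rpow_mul_exp_neg_mul_rpow (by norm_num) zero_lt_one (by positivity)
    have hbd : IntegrableOn
        (fun m : ℝ => (16 / a ^ 2) * (m ^ ((1:ℝ)/2) * Real.exp (-(1/γ) * m ^ (1:ℝ))))
        (Set.Ioi 0) := hbase.const_mul _
    refine Integrable.mono' hbd ?_ ?_
    · rw [hh_def]
      exact Measurable.aestronglyMeasurable (by fun_prop)
    · filter_upwards [ae_restrict_mem measurableSet_Ioi] with m hm
      have hm0 : (0:ℝ) < m := hm
      have hsm : (0:ℝ) < Real.sqrt m := Real.sqrt_pos.mpr hm0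
      have hpos : 0 < h m := by
        simp only [hh_def]
        positivity
      rw [Real.norm_eq_abs, abs_of_pos hpos]
      -- key bound : exp (-(a/2)/m) ≤ 16 m² / a²
      have hkey : Real.exp (-((a / 2) / m)) ≤ 16 * m ^ 2 / a ^ 2 := by
        set u : ℝ := (a / 2) / m with hu_def
        have hu : 0 < u := by rw [hu_def]; positivity
        have h1 : u ^ 2 / 4 ≤ Real.exp u := by
          have he1 : u / 2 + 1 ≤ Real.exp (u / 2) := Real.add_one_le_exp (u / 2)
          have he2 : (u / 2 + 1) ^ 2 ≤ Real.exp (u / 2) ^ 2 :=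
            pow_le_pow_left₀ (by positivity) he1 2
          have he3 : Real.exp (u / 2) ^ 2 = Real.exp u := by
            rw [sq, ← Real.exp_add, add_halves]
          nlinarith
        have h2 : Real.exp (-u) ≤ 4 / u ^ 2 := by
          rw [Real.exp_neg]
          calc (Real.exp u)⁻¹ ≤ (u ^ 2 / 4)⁻¹ :=
                inv_anti₀ (by positivity) h1
            _ = 4 / u ^ 2 := by field_simp
        calc Real.exp (-u) ≤ 4 / u ^ 2 := h2
          _ = 16 * m ^ 2 / a ^ 2 := by
              rw [hu_def]; field_simp; ring
      have hsplit : Real.exp (-(a / 2) / m - m / γ)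
          = Real.exp (-((a / 2) / m)) * Real.exp (-m / γ) := by
        rw [← Real.exp_add]; congr 1; ring
      have hrw : m ^ ((1:ℝ)/2) = Real.sqrt m := (Real.sqrt_eq_rpow m).symm
      have hrw1 : m ^ ((1:ℝ)) = m := Real.rpow_one m
      have hexp2 : Real.exp (-(1/γ) * m) = Real.exp (-m / γ) := by
        congr 1; ring
      rw [hrw, hrw1, hexp2]
      have hm2 : Real.sqrt m ^ 2 = m := Real.sq_sqrt hm0.le
      calc h m = (m * Real.sqrt m)⁻¹ * (Real.exp (-((a / 2) / m)) * Real.exp (-m / γ)) := by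
            rw [hh_def]; simp only []; rw [hsplit]
        _ ≤ (m * Real.sqrt m)⁻¹ * ((16 * m ^ 2 / a ^ 2) * Real.exp (-m / γ)) := by
            have hnn : (0:ℝ) ≤ (m * Real.sqrt m)⁻¹ := by positivity
            have hex : (0:ℝ) ≤ Real.exp (-m / γ) := (Real.exp_pos _).le
            apply mul_le_mul_of_nonneg_left _ hnn
            exact mul_le_mul_of_nonneg_right hkey hex
        _ = 16 / a ^ 2 * (Real.sqrt m * Real.exp (-m / γ)) := by
            generalize Real.exp (-m / γ) = E
            have hm2' : Real.sqrt m * Real.sqrt m = m := Real.mul_self_sqrt hm0.le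
            field_simp
            linear_combination (-E) * hm2
  -- positivity of ∫ h
  have hIpos : 0 < ∫ m in Set.Ioi (0:ℝ), h m := by
    have hnn : 0 ≤ᵐ[volume.restrict (Set.Ioi 0)] h := by
      filter_upwards [ae_restrict_mem measurableSet_Ioi] with m hm
      have hm0 : (0:ℝ) < m := hm
      have hsm : (0:ℝ) < Real.sqrt m := Real.sqrt_pos.mpr hm0
      have : 0 < h m := by simp only [hh_def]; positivity
      exact this.le
    rw [setIntegral_pos_iff_support_of_nonneg_ae hnn hint]
    have hsub : Set.Ioi (0:ℝ) ⊆ Function.support h := by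
      intro m hm
      have hm0 : (0:ℝ) < m := hm
      have hsm : (0:ℝ) < Real.sqrt m := Real.sqrt_pos.mpr hm0
      have : 0 < h m := by simp only [hh_def]; positivity
      exact this.ne'
    rw [Set.inter_eq_self_of_subset_right hsub]
    simp [Real.volume_Ioi]
  -- put it all together
  have hsc : (0:ℝ) < Real.sqrt c := Real.sqrt_pos.mpr hc
  constructor
  · rw [hnum, hden, hcv]
    have hval : Real.sqrt (2 / (γ * a)) = (Real.sqrt c)⁻¹ := by
      rw [show 2 / (γ * a) = c⁻¹ by rw [hc_def]; field_simp, Real.sqrt_inv]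
    rw [hval]
    rw [div_eq_iff (by positivity)]
    field_simp
  · rw [show 2 / (γ * a) = (2 / γ) / a by field_simp,
      Real.sqrt_div (by positivity) a, ha_def, Real.sqrt_sq_eq_abs]
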